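/- For a path-connected topological space X, the evaluation fibration p : X^I → X × X sending a path α to (α(0), α(1)) admits a global continuous section if and only if X is contractible. -/

import Mathlib

open Set unitInterval

universe u v

/-- A motion planner on a subset `U ⊆ X × X`: a continuous choice of paths
joining the two coordinates of each point of `U`. -/
def IsMotionPlanner {X : Type u} [TopologicalSpace X] (U : Set (X × X))
    (s : C(U, C(unitInterval, X))) : Prop :=
  ∀ z : U, ((s z) 0, (s z) 1) = (z : X × X)

/-- `X × X` admits an open cover by `n` sets, each admitting a continuous section of
the path fibration `p : X^I → X × X`, `p(α) = (α 0, α 1)`. -/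
def TCCover (X : Type u) [TopologicalSpace X] (n : ℕ) : Prop :=
  ∃ U : Fin n → Set (X × X),
    (∀ i, IsOpen (U i)) ∧ (∀ z : X × X, ∃ i, z ∈ U i) ∧
      ∀ i, ∃ s : C(U i, C(unitInterval, X)), IsMotionPlanner (U i) s

/-- (Non-normalized) topological complexity of Farber. -/
noncomputable def topologicalComplexity (X : Type u) [TopologicalSpace X] : ℕ :=
  sInf {n | TCCover X n}

/-- Monoidal version: each set contains the diagonal and the sections are constant paths
on the diagonal. -/
def TCMCover (X : Type u) [TopologicalSpace X] (n : ℕ) : Prop :=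
  ∃ U : Fin n → Set (X × X),
    (∀ i, IsOpen (U i)) ∧ (∀ i (x : X), (x, x) ∈ U i) ∧ (∀ z : X × X, ∃ i, z ∈ U i) ∧
      ∀ i, ∃ s : C(U i, C(unitInterval, X)), IsMotionPlanner (U i) s ∧
        ∀ (x : X) (h : (x, x) ∈ U i), s ⟨(x, x), h⟩ = ContinuousMap.const unitInterval x

/-- Monoidal topological complexity of Iwase–Sakai (non-normalized). -/
noncomputable def monoidalTC (X : Type u) [TopologicalSpace X] : ℕ :=
  sInf {n | TCMCover X n}

/-- `X` admits an open cover by `n` sets, each contractible in `X`. -/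
def catCover (X : Type u) [TopologicalSpace X] (n : ℕ) : Prop :=
  ∃ U : Fin n → Set X,
    (∀ i, IsOpen (U i)) ∧ (∀ x : X, ∃ i, x ∈ U i) ∧
      ∀ i, ∃ x₀ : X, ContinuousMap.Homotopic
        (⟨Subtype.val, continuous_subtype_val⟩ : C(U i, X)) (ContinuousMap.const (U i) x₀)

/-- Non-normalized Lusternik–Schnirelmann category (`LScat pt = 1`). -/
noncomputable def LScat (X : Type u) [TopologicalSpace X] : ℕ :=
  sInf {n | catCover X n}

/-- `X` is `q`-connected: path-connected with trivial homotopy groups `π_k` for `1 ≤ k ≤ q`. -/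
def IsQConnected (X : Type u) [TopologicalSpace X] (q : ℕ) : Prop :=
  PathConnectedSpace X ∧
    ∀ k : ℕ, 1 ≤ k → k ≤ q → ∀ x : X, Subsingleton (HomotopyGroup (Fin k) X x)

/-- `X` carries a CW-structure all of whose cells have dimension at most `m`:
there are characteristic maps from closed euclidean balls whose open-cell images cover `X`
injectively, cell boundaries attach to cells of lower dimension, no cells above dimension `m`,
and `X` has the weak topology determined by the cells. -/
def IsCWComplexOfDimLE (X : Type u) [TopologicalSpace X] (m : ℕ) : Prop :=
  ∃ (cells : ℕ → Type) (Φ : ∀ n, cells n →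
      C((Metric.closedBall (0 : EuclideanSpace ℝ (Fin n)) 1 :
          Set (EuclideanSpace ℝ (Fin n))), X)),
    (∀ n, m < n → IsEmpty (cells n)) ∧
    (∀ x : X, ∃ n, ∃ i : cells n,
        ∃ b : (Metric.closedBall (0 : EuclideanSpace ℝ (Fin n)) 1 :
            Set (EuclideanSpace ℝ (Fin n))),
          ‖(b : EuclideanSpace ℝ (Fin n))‖ < 1 ∧ Φ n i b = x) ∧
    (∀ n (i : cells n), Set.InjOn (Φ n i) {b | ‖(b : EuclideanSpace ℝ (Fin n))‖ < 1}) ∧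
    (∀ n (i : cells n)
        (b : (Metric.closedBall (0 : EuclideanSpace ℝ (Fin n)) 1 :
            Set (EuclideanSpace ℝ (Fin n)))),
        ‖(b : EuclideanSpace ℝ (Fin n))‖ = 1 →
        ∃ k, k < n ∧ ∃ j : cells k,
          ∃ b' : (Metric.closedBall (0 : EuclideanSpace ℝ (Fin k)) 1 :
              Set (EuclideanSpace ℝ (Fin k))),
            Φ k j b' = Φ n i b) ∧
    (∀ A : Set X, (∀ n (i : cells n), IsClosed ((Φ n i) ⁻¹' A)) → IsClosed A)

/-- For a path-connected space `X`, the evaluation fibration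
`p : X^I → X × X`, `p(α) = (α 0, α 1)`, admits a global continuous section
if and only if `X` is contractible. -/
theorem evalFibration_hasGlobalSection_iff_contractible
    (X : Type u) [TopologicalSpace X] [PathConnectedSpace X] :
    (∃ s : C(X × X, C(unitInterval, X)),
        ∀ z : X × X, (((s z) 0 : X), ((s z) 1 : X)) = z) ↔ ContractibleSpace X := by
  constructor
  · rintro ⟨s, hs⟩
    obtain ⟨x₀⟩ : Nonempty X := inferInstance
    rw [contractible_iff_id_nullhomotopic]
    refine ⟨x₀, ⟨{ toFun := fun p => s (p.2, x₀) p.1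
                   continuous_toFun := by fun_prop
                   map_zero_left := fun x => ?_
                   map_one_left := fun x => ?_ }⟩⟩
    · have := hs (x, x₀); simpa using congrArg Prod.fst this
    · have := hs (x, x₀); simpa using congrArg Prod.snd this
  · intro h
    obtain ⟨x₀, hn⟩ := (contractible_iff_id_nullhomotopic X).mp h
    obtain ⟨H⟩ := hn
    let γ : ∀ x : X, Path x x₀ := fun x =>
      { toFun := fun t => H (t, x)
        continuous_toFun := by fun_prop
        source' := H.apply_zero x
        target' := H.apply_one x }
    have hγc : Continuous ↿γ := by
      show Continuous fun p : X × unitInterval => H (p.2, p.1)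
      fun_prop
    let P : ∀ z : X × X, Path z.1 z.2 := fun z => (γ z.1).trans (γ z.2).symm
    have hPc : Continuous ↿P :=
      Path.trans_continuous_family (fun z : X × X => γ z.1)
        (hγc.comp (continuous_fst.fst.prodMk continuous_snd))
        (fun z : X × X => (γ z.2).symm)
        (Path.symm_continuous_family (fun z : X × X => γ z.2)
          (hγc.comp (continuous_fst.snd.prodMk continuous_snd)))
    refine ⟨⟨fun z => (P z).toContinuousMap,
        ContinuousMap.continuous_of_continuous_uncurry _ hPc⟩, fun z => ?_⟩
    exact Prod.ext (P z).source (P z).target
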